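/- Fix r > 0, σ > 0, K > 0. Set α = -2r/σ² and c = 2rK/(2r + σ²), and define f : (0,∞) → ℝ by f(x) = (K - c)·(x/c)^α. Then: (i) 0 < c < K; (ii) f solves the ODE (σ²x²/2)·f''(x) + r·x·f'(x) - r·f(x) = 0 for all x > 0; (iii) f(c) = K - c; and (iv) f'(c) = -1 (smooth fit). -/

import Mathlib

theorem stmt_15 (r σ K : ℝ) (hr : 0 < r) (hσ : 0 < σ) (hK : 0 < K)
    (α c : ℝ) (hα : α = -(2 * r) / σ ^ 2) (hc : c = 2 * r * K / (2 * r + σ ^ 2))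
    (f : ℝ → ℝ) (hf : ∀ x, f x = (K - c) * (x / c) ^ α) :
    (0 < c ∧ c < K) ∧
    (∀ x > (0:ℝ),
      σ ^ 2 * x ^ 2 / 2 * deriv (deriv f) x + r * x * deriv f x - r * f x = 0) ∧
    f c = K - c ∧
    deriv f c = -1 := by
  have hσ2 : (0:ℝ) < σ ^ 2 := by positivity
  have hden : (0:ℝ) < 2 * r + σ ^ 2 := by positivity
  have hc0 : 0 < c := by rw [hc]; positivity
  have hcK : c < K := by
    rw [hc, div_lt_iff₀ hden]; nlinarith
  have hfe : f = fun y => (K - c) * (y / c) ^ α := funext hf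
  -- first derivative
  have hD1 : ∀ x : ℝ, 0 < x →
      HasDerivAt f ((K - c) * α / c * (x / c) ^ (α - 1)) x := by
    intro x hx
    have h1 : HasDerivAt (fun y : ℝ => y / c) (1 / c) x :=
      (hasDerivAt_id x).div_const c
    have h2 := (h1.rpow_const (p := α) (Or.inl (by positivity : x / c ≠ 0))).const_mul (K - c)
    rw [hfe]
    refine h2.congr_deriv ?_
    ring
  have hdf : ∀ x : ℝ, 0 < x →
      deriv f x = (K - c) * α / c * (x / c) ^ (α - 1) := fun x hx => (hD1 x hx).deriv
  -- second derivative
  have hD2 : ∀ x : ℝ, 0 < x →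
      deriv (deriv f) x = (K - c) * α / c * ((α - 1) / c) * (x / c) ^ (α - 2) := by
    intro x hx
    have hev : deriv f =ᶠ[nhds x] fun y => (K - c) * α / c * (y / c) ^ (α - 1) := by
      filter_upwards [isOpen_Ioi.mem_nhds hx] with y hy
      exact hdf y hy
    rw [Filter.EventuallyEq.deriv_eq hev]
    have h1 : HasDerivAt (fun y : ℝ => y / c) (1 / c) x :=
      (hasDerivAt_id x).div_const c
    have h2 := (h1.rpow_const (p := α - 1) (Or.inl (by positivity : x / c ≠ 0))).const_mul
      ((K - c) * α / c)
    have h3 : HasDerivAt (fun y => (K - c) * α / c * (y / c) ^ (α - 1))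
        ((K - c) * α / c * ((α - 1) / c) * (x / c) ^ (α - 2)) x := by
      have he : α - 1 - 1 = α - 2 := by ring
      rw [he] at h2
      refine h2.congr_deriv ?_
      ring
    exact h3.deriv
  have hfc : f c = K - c := by
    rw [hf, div_self hc0.ne', Real.one_rpow, mul_one]
  have hασ : α * σ ^ 2 = -(2 * r) := by
    rw [hα]; field_simp
  refine ⟨⟨hc0, hcK⟩, ?_, hfc, ?_⟩
  · intro x hx
    have ht : 0 < x / c := by positivity
    rw [hD2 x hx, hdf x hx, hf x]
    have e1 : (x / c) ^ (α - 1) = (x / c) ^ α / (x / c) := by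
      rw [Real.rpow_sub ht, Real.rpow_one]
    have e2 : (x / c) ^ (α - 2) = (x / c) ^ α / (x / c) ^ (2:ℕ) := by
      rw [show (α - 2 : ℝ) = α - ((2:ℕ):ℝ) by norm_num, Real.rpow_sub ht,
        Real.rpow_natCast]
    rw [e1, e2]
    have hx0 : x ≠ 0 := hx.ne'
    field_simp
    set t := (x / c) ^ α with htdef
    linear_combination ((K - c) * t * (α - 1)) * hασ
  · rw [hdf c hc0, div_self hc0.ne', Real.one_rpow, mul_one, hc, hα]
    field_simp
    ring
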